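/- Let ε > 0 and t, d, e, f ∈ ℝ. Suppose s : [0,1] → ℝ is real-analytic on [0,1], satisfies the radial hedgehog ODE ε²(s''(r) + (2/r)s'(r) − (6/r²)s(r)) = t·s(r) − √6·s(r)² + (4/3)s(r)³ + (2d/9)s(r)⁴ + (4e/9 + 2(f−e)/27)s(r)⁵ for all r ∈ (0,1], satisfies s(r) ≥ 0 for all r ∈ [0,1], and satisfies s(1) > 0. Then s(r) > 0 for every r ∈ (0,1]. -/

import Mathlib

noncomputable section
open MeasureTheory

/-- The radial hedgehog ODE at radius `r`:
`ε²(s'' + (2/r)s' − (6/r²)s) = t·s − √6·s² + (4/3)s³ + (2d/9)s⁴ + (4e/9 + 2(f−e)/27)s⁵`. -/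
def RHode (ε t d e f : ℝ) (s : ℝ → ℝ) (r : ℝ) : Prop :=
  ε ^ 2 * (deriv (deriv s) r + 2 / r * deriv s r - 6 / r ^ 2 * s r)
    = t * s r - Real.sqrt 6 * (s r) ^ 2 + 4 / 3 * (s r) ^ 3
      + 2 * d / 9 * (s r) ^ 4 + (4 * e / 9 + 2 * (f - e) / 27) * (s r) ^ 5

/-- Derivative of `(w - a)^(k+1) * g w`. -/
lemma hasDerivAt_pow_mul {g : ℝ → ℝ} {a z : ℝ} (k : ℕ) (hg : DifferentiableAt ℝ g z) :
    HasDerivAt (fun w => (w - a) ^ (k + 1) * g w)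
      ((k + 1 : ℕ) * (z - a) ^ k * g z + (z - a) ^ (k + 1) * deriv g z) z := by
  have h1 : HasDerivAt (fun w => (w - a) ^ (k + 1)) ((k + 1 : ℕ) * (z - a) ^ k) z := by
    have := ((hasDerivAt_id z).sub_const a).fun_pow (k + 1)
    simpa using this
  simpa using h1.fun_mul hg.hasDerivAt

theorem radial_hedgehog_strict_positivity
    (ε t d e f : ℝ) (hε : 0 < ε) (s : ℝ → ℝ)
    (hs : AnalyticOnNhd ℝ s (Set.Icc 0 1))
    (hode : ∀ r ∈ Set.Ioc (0:ℝ) 1, RHode ε t d e f s r)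
    (hnonneg : ∀ r ∈ Set.Icc (0:ℝ) 1, 0 ≤ s r) (h1 : 0 < s 1) :
    ∀ r ∈ Set.Ioc (0:ℝ) 1, 0 < s r := by
  intro a ha
  by_contra hle
  push_neg at hle
  have ha0 : s a = 0 := le_antisymm hle (hnonneg a ⟨ha.1.le, ha.2⟩)
  have ha1 : a ≠ 1 := by rintro rfl; exact absurd ha0 (ne_of_gt h1)
  have haI : a ∈ Set.Ioo (0:ℝ) 1 := ⟨ha.1, lt_of_le_of_ne ha.2 ha1⟩
  have haIcc : a ∈ Set.Icc (0:ℝ) 1 := ⟨ha.1.le, ha.2⟩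
  have hsa : AnalyticAt ℝ s a := hs a haIcc
  -- s is not eventually zero near a
  have hnev : ¬ (∀ᶠ z in nhds a, s z = 0) := by
    intro h
    have := hs.eqOn_zero_of_preconnected_of_eventuallyEq_zero isPreconnected_Icc haIcc
      (h.mono fun z hz => hz)
    exact absurd (this (Set.mem_Icc.mpr ⟨zero_le_one, le_refl 1⟩)) (ne_of_gt h1)
  -- finite order
  have hord : analyticOrderAt s a ≠ ⊤ := fun h => hnev (analyticOrderAt_eq_top.mp h)
  obtain ⟨n, hn⟩ := WithTop.ne_top_iff_exists.mp hord
  obtain ⟨g, hg, hg0, hfac⟩ := (hsa.analyticOrderAt_eq_natCast (n := n)).mp hn.symm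
  simp only [smul_eq_mul] at hfac
  -- n ≥ 1
  have hn1 : 1 ≤ n := by
    by_contra h
    push_neg at h; interval_cases n
    have := hfac.self_of_nhds
    simp [ha0] at this
    exact hg0 this.symm
  -- deriv s a = 0 (local min)
  have hmin : IsLocalMin s a := by
    have hnb : Set.Ioo (0:ℝ) 1 ∈ nhds a := isOpen_Ioo.mem_nhds haI
    filter_upwards [hnb] with z hz
    rw [ha0]; exact hnonneg z ⟨hz.1.le, hz.2.le⟩
  have hds0 : deriv s a = 0 := hmin.deriv_eq_zero
  -- n ≥ 2
  obtain ⟨U, hUmem, hUg⟩ := hg.exists_mem_nhds_analyticOnNhd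
  have hUdg : AnalyticOnNhd ℝ (deriv g) U := hUg.deriv
  have hUddg : AnalyticOnNhd ℝ (deriv (deriv g)) U := hUdg.deriv
  have haU : a ∈ U := mem_of_mem_nhds hUmem
  have hn2 : 2 ≤ n := by
    rcases Nat.lt_or_ge n 2 with h | h
    · exfalso
      interval_cases n
      have hfacE : s =ᶠ[nhds a] (fun z => (z - a) ^ 1 * g z) := hfac
      have hds : deriv s a = deriv (fun z => (z - a) ^ 1 * g z) a := hfacE.deriv_eq
      have hD : HasDerivAt (fun z => (z - a) ^ (0 + 1) * g z)
          ((0 + 1 : ℕ) * (a - a) ^ 0 * g a + (a - a) ^ (0 + 1) * deriv g a) a :=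
        hasDerivAt_pow_mul 0 hg.differentiableAt
      rw [hds, hD.deriv] at hds0
      simp at hds0
      exact hg0 hds0
    · exact h
  obtain ⟨m, rfl⟩ : ∃ m, n = m + 2 := ⟨n - 2, by omega⟩
  set c := g a with hc
  -- eventual analyticity of g and deriv g
  have hev : ∀ᶠ z in nhds a, AnalyticAt ℝ g z := hg.eventually_analyticAt
  -- first derivative factorization
  have hfacE : s =ᶠ[nhds a] (fun z => (z - a) ^ (m + 2) * g z) := hfac
  have hfac1 : ∀ᶠ z in nhds a,
      deriv s z = (m + 2 : ℕ) * (z - a) ^ (m + 1) * g z + (z - a) ^ (m + 2) * deriv g z := by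
    filter_upwards [hfacE.deriv, hUmem] with z h1' hzU
    rw [h1', (hasDerivAt_pow_mul (m + 1) (hUg z hzU).differentiableAt).deriv]
  -- second derivative factorization
  have hfac1' : deriv s =ᶠ[nhds a]
      (fun z => (m + 2 : ℕ) * (z - a) ^ (m + 1) * g z + (z - a) ^ (m + 2) * deriv g z) := hfac1
  have hfac2 : ∀ᶠ z in nhds a,
      deriv (deriv s) z = (m + 2 : ℕ) * ((m + 1 : ℕ) * (z - a) ^ m * g z
          + (z - a) ^ (m + 1) * deriv g z)
        + ((m + 2 : ℕ) * (z - a) ^ (m + 1) * deriv g z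
          + (z - a) ^ (m + 2) * deriv (deriv g) z) := by
    filter_upwards [hfac1'.deriv, hUmem] with z h1' hzU
    rw [h1']
    have hA : HasDerivAt (fun w => (w - a) ^ (m + 1) * g w)
        ((m + 1 : ℕ) * (z - a) ^ m * g z + (z - a) ^ (m + 1) * deriv g z) z :=
      hasDerivAt_pow_mul m (hUg z hzU).differentiableAt
    have hB : HasDerivAt (fun w => (w - a) ^ (m + 2) * deriv g w)
        ((m + 2 : ℕ) * (z - a) ^ (m + 1) * deriv g z + (z - a) ^ (m + 2) * deriv (deriv g) z) z :=
      hasDerivAt_pow_mul (m + 1) (hUdg z hzU).differentiableAt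
    have hAB : HasDerivAt
        (fun w => (m + 2 : ℕ) * ((w - a) ^ (m + 1) * g w) + (w - a) ^ (m + 2) * deriv g w)
        ((m + 2 : ℕ) * ((m + 1 : ℕ) * (z - a) ^ m * g z + (z - a) ^ (m + 1) * deriv g z)
          + ((m + 2 : ℕ) * (z - a) ^ (m + 1) * deriv g z
            + (z - a) ^ (m + 2) * deriv (deriv g) z)) z :=
      (hA.const_mul _).add hB
    rw [← hAB.deriv]
    apply Filter.EventuallyEq.deriv_eq
    filter_upwards with w
    ring
  -- the explicit limit function
  set P : ℝ → ℝ := fun z => t - Real.sqrt 6 * s z + 4 / 3 * (s z) ^ 2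
      + 2 * d / 9 * (s z) ^ 3 + (4 * e / 9 + 2 * (f - e) / 27) * (s z) ^ 4 with hP
  set Ψ : ℝ → ℝ := fun z =>
    ε ^ 2 * (((m + 2 : ℕ) * ((m + 1 : ℕ) * g z + (z - a) * deriv g z)
        + ((m + 2 : ℕ) * (z - a) * deriv g z + (z - a) ^ 2 * deriv (deriv g) z))
      + 2 / z * ((m + 2 : ℕ) * (z - a) * g z + (z - a) ^ 2 * deriv g z)
      - 6 / z ^ 2 * ((z - a) ^ 2 * g z))
    - (z - a) ^ 2 * g z * P z with hΨ
  -- quotient function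
  set Q : ℝ → ℝ := fun z =>
    (ε ^ 2 * (deriv (deriv s) z + 2 / z * deriv s z - 6 / z ^ 2 * s z)
      - (t * s z - Real.sqrt 6 * (s z) ^ 2 + 4 / 3 * (s z) ^ 3
        + 2 * d / 9 * (s z) ^ 4 + (4 * e / 9 + 2 * (f - e) / 27) * (s z) ^ 5))
      / (z - a) ^ m with hQ
  -- Q is eventually 0 on the punctured nbhd
  have hQ0 : ∀ᶠ z in nhdsWithin a {a}ᶜ, Q z = 0 := by
    have hnb : Set.Ioo (0:ℝ) 1 ∈ nhdsWithin a {a}ᶜ :=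
      nhdsWithin_le_nhds (isOpen_Ioo.mem_nhds haI)
    filter_upwards [hnb] with z hz
    have hz' := hode z ⟨hz.1, hz.2.le⟩
    unfold RHode at hz'
    simp only [hQ]
    rw [sub_eq_zero.mpr hz', zero_div]
  -- Q eventually equals Ψ on the punctured nbhd
  have hQΨ : ∀ᶠ z in nhdsWithin a {a}ᶜ, Q z = Ψ z := by
    filter_upwards [nhdsWithin_le_nhds hfac, nhdsWithin_le_nhds hfac1,
      nhdsWithin_le_nhds hfac2, self_mem_nhdsWithin] with z h0 h1' h2' hz
    have hza : z - a ≠ 0 := sub_ne_zero.mpr (by simpa using hz)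
    have hzm : (z - a) ^ m ≠ 0 := pow_ne_zero _ hza
    simp only [hQ, hΨ, hP]
    rw [h0, h1', h2']
    field_simp
    ring
  -- limit of Ψ
  have hΨcont : Filter.Tendsto Ψ (nhds a) (nhds (ε ^ 2 * ((m + 2 : ℕ) * ((m + 1 : ℕ) * c)))) := by
    have hgc : ContinuousAt g a := hg.continuousAt
    have hdgc : ContinuousAt (deriv g) a := (hUdg a haU).continuousAt
    have hddgc : ContinuousAt (deriv (deriv g)) a := (hUddg a haU).continuousAt
    have hsc : ContinuousAt s a := hsa.continuousAt
    have ha0' : a ≠ 0 := ne_of_gt ha.1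
    have hcont : ContinuousAt Ψ a := by
      simp only [hΨ, hP]
      fun_prop (disch := first | assumption | positivity)
    have hΨa : Ψ a = ε ^ 2 * ((m + 2 : ℕ) * ((m + 1 : ℕ) * c)) := by
      simp only [hΨ, hc]
      ring
    rw [← hΨa]
    exact hcont.tendsto
  have hQΨ' : Q =ᶠ[nhdsWithin a {a}ᶜ] Ψ := hQΨ
  have hQ0' : Q =ᶠ[nhdsWithin a {a}ᶜ] (fun _ => (0:ℝ)) := hQ0
  have hQt : Filter.Tendsto Q (nhdsWithin a {a}ᶜ)
      (nhds (ε ^ 2 * ((m + 2 : ℕ) * ((m + 1 : ℕ) * c)))) :=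
    Filter.Tendsto.congr' hQΨ'.symm (hΨcont.mono_left nhdsWithin_le_nhds)
  have hQt0 : Filter.Tendsto Q (nhdsWithin a {a}ᶜ) (nhds 0) :=
    Filter.Tendsto.congr' hQ0'.symm tendsto_const_nhds
  have huniq : ε ^ 2 * ((m + 2 : ℕ) * ((m + 1 : ℕ) * c)) = 0 :=
    tendsto_nhds_unique hQt hQt0
  have hc0 : c = 0 := by
    by_contra hcne
    have h1' : ((m + 1 : ℕ) : ℝ) * c ≠ 0 :=
      mul_ne_zero (Nat.cast_ne_zero.mpr (by omega)) hcne
    have h2' : ((m + 2 : ℕ) : ℝ) * (((m + 1 : ℕ) : ℝ) * c) ≠ 0 :=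
      mul_ne_zero (Nat.cast_ne_zero.mpr (by omega)) h1'
    exact mul_ne_zero (pow_ne_zero 2 hε.ne') h2' huniq
  exact hg0 hc0
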